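/- arXiv:2006.15529 — 2 statements merged into one kernel-verified Lean document; each statement's English description precedes it below -/
import Mathlib

section
/- For all l ∈ [0, π_2/2], the derivative of arctan(cleaf_2(l)) with respect to l equals -sleaf_2(l). -/
open Real MeasureTheory intervalIntegral Set Filter Topology

noncomputable def lemf (t : ℝ) : ℝ := 1 / Real.sqrt (1 - t ^ 4)

noncomputable def LF (r : ℝ) : ℝ := ∫ t in (0:ℝ)..r, lemf t

noncomputable def lphi (t : ℝ) : ℝ := Real.sqrt ((1 - t ^ 2) / (1 + t ^ 2))




lemma lemf_nonneg (t : ℝ) : 0 ≤ lemf t := by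
  unfold lemf; positivity

lemma lemf_meas : Measurable lemf :=
  measurable_const.div (Real.continuous_sqrt.measurable.comp (by fun_prop))

lemma sq4_lt {t : ℝ} (h0 : -1 < t) (h1 : t < 1) : t ^ 4 < 1 := by
  have := abs_lt.2 ⟨h0, h1⟩
  calc t ^ 4 = |t| ^ 4 := by rw [← abs_pow, abs_of_nonneg (by positivity)]
  _ < 1 := by simpa using pow_lt_one₀ (abs_nonneg t) this (by norm_num : (4:ℕ) ≠ 0)

lemma lemf_pos {t : ℝ} (h0 : -1 < t) (h1 : t < 1) : 0 < lemf t := by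
  have h4 : (0:ℝ) < 1 - t ^ 4 := by have := sq4_lt h0 h1; linarith
  unfold lemf
  positivity

lemma lemf_contAt {t : ℝ} (h0 : -1 < t) (h1 : t < 1) : ContinuousAt lemf t := by
  have h4 : (0:ℝ) < 1 - t ^ 4 := by have := sq4_lt h0 h1; linarith
  have : Real.sqrt (1 - t ^ 4) ≠ 0 := by positivity
  exact continuousAt_const.div ((Real.continuous_sqrt.continuousAt).comp (by fun_prop)) this

lemma lemf_le_one {t : ℝ} (h0 : 0 ≤ t) (h1 : t ≤ 1) : 1 ≤ lemf t ∨ lemf t = 0 := by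
  rcases eq_or_lt_of_le h1 with h | h
  · right; subst h; norm_num [lemf]
  · left
    have h4 : (0:ℝ) < 1 - t ^ 4 := by have := sq4_lt (by linarith) h; linarith
    have hle : Real.sqrt (1 - t ^ 4) ≤ 1 := by
      have := Real.sqrt_le_sqrt (show 1 - t ^ 4 ≤ 1 by nlinarith [pow_nonneg h0 4])
      rwa [Real.sqrt_one] at this
    rw [lemf, le_div_iff₀ (by positivity)]
    linarith

lemma one_le_lemf {t : ℝ} (h0 : 0 ≤ t) (h1 : t < 1) : 1 ≤ lemf t := by
  rcases lemf_le_one h0 h1.le with h | h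
  · exact h
  · exact absurd h (lemf_pos (by linarith) h1).ne'

lemma lemf_intble : IntervalIntegrable lemf volume 0 1 := by
  have hg : IntervalIntegrable (fun x : ℝ => (1 - x) ^ (-(1:ℝ)/2)) volume 0 1 := by
    have := ((intervalIntegrable_rpow' (a := 0) (b := 1) (r := -1/2)
      (by norm_num)).comp_sub_left 1).symm
    simpa using this
  apply hg.mono_fun (lemf_meas.aestronglyMeasurable)
  filter_upwards [ae_restrict_mem measurableSet_uIoc] with x hx
  rw [uIoc_of_le (by norm_num : (0:ℝ) ≤ 1)] at hx
  obtain ⟨hx0, hx1⟩ := hx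
  have hx0' : 0 ≤ x := le_of_lt hx0
  have h1 : 1 - x ≤ 1 - x ^ 4 := by nlinarith [mul_le_of_le_one_right hx0' (pow_le_one₀ hx0' hx1 (n := 3))]
  have h2 : Real.sqrt (1 - x) ≤ Real.sqrt (1 - x ^ 4) := Real.sqrt_le_sqrt h1
  have hr : (1 - x) ^ (-(1:ℝ)/2) = 1 / Real.sqrt (1 - x) := by
    rw [show -(1:ℝ)/2 = -(1/2) by norm_num, Real.rpow_neg (by linarith),
      ← Real.sqrt_eq_rpow, one_div]
  simp only [lemf, Real.norm_eq_abs, hr]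
  rcases eq_or_lt_of_le hx1 with h | h
  · subst h; norm_num
  · have h4 : (0:ℝ) < 1 - x ^ 4 := by have := sq4_lt (by linarith) h; linarith
    have h1x : (0:ℝ) < 1 - x := by linarith
    rw [abs_of_nonneg (by positivity), abs_of_nonneg (by positivity)]
    apply div_le_div_of_nonneg_left one_pos.le (by positivity) h2


lemma lemf_intble' {a b : ℝ} (ha : a ∈ Icc (0:ℝ) 1) (hb : b ∈ Icc (0:ℝ) 1) :
    IntervalIntegrable lemf volume a b :=
  lemf_intble.mono_set (uIcc_subset_uIcc
    (by rw [uIcc_of_le (by norm_num : (0:ℝ) ≤ 1)]; exact ha)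
    (by rw [uIcc_of_le (by norm_num : (0:ℝ) ≤ 1)]; exact hb))

lemma LF_sub {a b : ℝ} (ha : a ∈ Icc (0:ℝ) 1) (hb : b ∈ Icc (0:ℝ) 1) :
    LF b - LF a = ∫ t in a..b, lemf t := by
  have := integral_add_adjacent_intervals (f := lemf) (μ := volume) (a := 0) (b := a) (c := b)
    (lemf_intble' ⟨le_rfl, by norm_num⟩ ha) (lemf_intble' ha hb)
  unfold LF
  linarith

lemma LF_zero : LF 0 = 0 := by simp [LF]

lemma LF_lip {a b : ℝ} (ha : a ∈ Icc (0:ℝ) 1) (hb : b ∈ Icc (0:ℝ) 1) (hab : a ≤ b) :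
    b - a ≤ LF b - LF a := by
  rw [LF_sub ha hb]
  have h1 : (fun _ : ℝ => (1:ℝ)) ≤ᵐ[volume.restrict (Icc a b)] lemf := by
    have hz : (volume.restrict (Icc a b)) {1} = 0 := by
      apply le_antisymm _ zero_le
      calc (volume.restrict (Icc a b)) {1} ≤ volume {1} := Measure.restrict_apply_le _ _
      _ = 0 := by simp
    filter_upwards [ae_restrict_mem measurableSet_Icc, measure_eq_zero_iff_ae_notMem.1 hz]
      with x hx hne
    simp only [mem_singleton_iff] at hne
    exact one_le_lemf (le_trans ha.1 hx.1) (lt_of_le_of_ne (le_trans hx.2 hb.2) hne)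
  have := intervalIntegral.integral_mono_ae_restrict (μ := volume) hab
    (intervalIntegrable_const) (lemf_intble' ha hb) h1
  simpa using this

lemma LF_strictMono : StrictMonoOn LF (Icc (0:ℝ) 1) := by
  intro a ha b hb hab
  have := LF_lip ha hb hab.le
  linarith

lemma LF_inj : InjOn LF (Icc (0:ℝ) 1) := LF_strictMono.injOn

lemma LF_cont : ContinuousOn LF (Icc (0:ℝ) 1) := by
  have := intervalIntegral.continuousOn_primitive_interval' (a := 0) (μ := volume)
    (b₁ := (0:ℝ)) (b₂ := 1) lemf_intble left_mem_uIcc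
  rwa [uIcc_of_le (by norm_num : (0:ℝ) ≤ 1)] at this

lemma LF_hasDerivAt {c : ℝ} (h0 : 0 ≤ c) (h1 : c < 1) : HasDerivAt LF (lemf c) c :=
  intervalIntegral.integral_hasDerivAt_right (lemf_intble' ⟨le_rfl, by norm_num⟩ ⟨h0, h1.le⟩)
    lemf_meas.stronglyMeasurable.stronglyMeasurableAtFilter (lemf_contAt (by linarith) h1)


lemma lphi_cont : Continuous lphi := by
  apply Real.continuous_sqrt.comp
  apply Continuous.div (by fun_prop) (by fun_prop)
  intro t; positivity

lemma lphi_zero : lphi 0 = 1 := by norm_num [lphi]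

lemma lphi_one : lphi 1 = 0 := by norm_num [lphi]

lemma lphi_mem {t : ℝ} (ht : t ∈ Icc (0:ℝ) 1) : lphi t ∈ Icc (0:ℝ) 1 := by
  obtain ⟨h0, h1⟩ := ht
  constructor
  · exact Real.sqrt_nonneg _
  · rw [lphi, show (1:ℝ) = Real.sqrt 1 from (Real.sqrt_one).symm]
    apply Real.sqrt_le_sqrt
    rw [div_le_one (by positivity)]
    nlinarith

lemma lphi_pos {t : ℝ} (h1 : t < 1) (h0 : -1 < t) : 0 < lphi t := by
  apply Real.sqrt_pos.2
  apply div_pos _ (by positivity)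
  nlinarith

lemma lphi_lt_one {t : ℝ} (ht : 0 < t) (ht1 : t ≤ 1) : lphi t < 1 := by
  rw [lphi, Real.sqrt_lt' one_pos, one_pow, div_lt_one (by positivity)]
  nlinarith

lemma lphi_sq {t : ℝ} (h1k : -1 < t) (h1 : t < 1) :
    lphi t ^ 2 = (1 - t ^ 2) / (1 + t ^ 2) := by
  rw [lphi, Real.sq_sqrt]
  apply div_nonneg (by nlinarith) (by positivity)

lemma lphi_hasDerivAt {t : ℝ} (h0 : 0 < t) (h1 : t < 1) :
    HasDerivAt lphi (-(2 * t) / ((1 + t ^ 2) * Real.sqrt (1 - t ^ 4))) t := by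
  set a := Real.sqrt (1 - t ^ 2) with ha_def
  set b := Real.sqrt (1 + t ^ 2) with hb_def
  have ha2 : a ^ 2 = 1 - t ^ 2 := Real.sq_sqrt (by nlinarith)
  have hb2 : b ^ 2 = 1 + t ^ 2 := Real.sq_sqrt (by positivity)
  have ha : 0 < a := Real.sqrt_pos.2 (by nlinarith)
  have hb : 0 < b := Real.sqrt_pos.2 (by positivity)
  have hq : Real.sqrt ((1 - t ^ 2) / (1 + t ^ 2)) = a / b := by
    rw [show (1 - t ^ 2) / (1 + t ^ 2) = (a / b) ^ 2 by
      rw [div_pow, ha2, hb2], Real.sqrt_sq (by positivity)]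
  have hab : Real.sqrt (1 - t ^ 4) = a * b := by
    rw [show (1 : ℝ) - t ^ 4 = (1 - t ^ 2) * (1 + t ^ 2) by ring, ← ha2, ← hb2,
      show a ^ 2 * b ^ 2 = (a * b) ^ 2 by ring, Real.sqrt_sq (by positivity)]
  have hnum : HasDerivAt (fun t : ℝ => 1 - t ^ 2) (-(2 * t)) t := by
    simpa using ((hasDerivAt_pow 2 t).const_sub 1)
  have hden : HasDerivAt (fun t : ℝ => 1 + t ^ 2) (2 * t) t := by
    simpa using ((hasDerivAt_pow 2 t).const_add 1)
  have hdiv := hnum.div hden (by positivity)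
  have hsq := hdiv.sqrt (by
    have : (0:ℝ) < (1 - t ^ 2) / (1 + t ^ 2) := div_pos (by nlinarith) (by positivity)
    exact this.ne')
  convert hsq using 1
  · rfl
  simp only [Pi.div_apply]
  rw [hq, hab]
  field_simp
  linear_combination 2 * hb2

lemma sqrt_lphi_four {t : ℝ} (h0 : 0 ≤ t) (h1 : t < 1) :
    Real.sqrt (1 - lphi t ^ 4) = 2 * t / (1 + t ^ 2) := by
  have hq := lphi_sq (by linarith : -1 < t) h1
  have : 1 - lphi t ^ 4 = (2 * t / (1 + t ^ 2)) ^ 2 := by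
    rw [show lphi t ^ 4 = (lphi t ^ 2) ^ 2 by ring, hq]
    have hd : (0:ℝ) < 1 + t ^ 2 := by positivity
    field_simp
    ring
  rw [this, Real.sqrt_sq (by positivity)]

lemma G_hasDerivAt {t : ℝ} (h0 : 0 < t) (h1 : t < 1) :
    HasDerivAt (fun u => LF (lphi u) + LF u) 0 t := by
  have hmem := lphi_mem ⟨h0.le, h1.le⟩
  have hlt := lphi_lt_one h0 h1.le
  have hcomp := (LF_hasDerivAt hmem.1 hlt).comp t (lphi_hasDerivAt h0 h1)
  have hsum := hcomp.add (LF_hasDerivAt h0.le h1)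
  convert hsum using 1
  · rfl
  · rfl
  · rfl
  have hS : Real.sqrt (1 - t ^ 4) > 0 := by
    apply Real.sqrt_pos.2
    have := sq4_lt (by linarith : -1 < t) h1
    linarith
  rw [lemf, sqrt_lphi_four h0.le h1, lemf]
  have hd : (0:ℝ) < 1 + t ^ 2 := by positivity
  field_simp
  ring

lemma G_const : ∀ t ∈ Icc (0:ℝ) 1, LF (lphi t) + LF t = LF 1 := by
  set G := fun u => LF (lphi u) + LF u with hG
  have hGc : ContinuousOn G (Icc 0 1) := by
    apply ContinuousOn.add _ LF_cont
    exact LF_cont.comp lphi_cont.continuousOn (fun x hx => lphi_mem hx)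
  have key : ∀ x ∈ Ioo (0:ℝ) 1, ∀ y ∈ Ioo (0:ℝ) 1, x ≤ y → G x = G y := by
    intro x hx y hy hxy
    rcases eq_or_lt_of_le hxy with rfl | hxy
    · rfl
    have hIcc : Icc x y ⊆ Ioo (0:ℝ) 1 := fun z hz => ⟨lt_of_lt_of_le hx.1 hz.1,
      lt_of_le_of_lt hz.2 hy.2⟩
    have := eq_of_has_deriv_right_eq (f := G) (g := fun _ => G x) (f' := fun _ => (0:ℝ))
      (a := x) (b := y)
      (fun z hz => (G_hasDerivAt (hIcc ⟨hz.1, hz.2.le⟩).1 (hIcc ⟨hz.1, hz.2.le⟩).2).hasDerivWithinAt)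
      (fun z _ => (hasDerivWithinAt_const z _ (G x)).congr_deriv rfl)
      (hGc.mono (fun z hz => ⟨le_trans hx.1.le hz.1, le_trans hz.2 hy.2.le⟩))
      continuousOn_const rfl
    exact (this y (right_mem_Icc.2 hxy.le)).symm
  have hmem12 : (1/2 : ℝ) ∈ Ioo (0:ℝ) 1 := by norm_num
  have hIoo : ∀ x ∈ Ioo (0:ℝ) 1, G x = G (1/2) := by
    intro x hx
    rcases le_total x (1/2) with h | h
    · exact key x hx _ hmem12 h
    · exact (key _ hmem12 x hx h).symm
  have hlim : ∀ t ∈ Icc (0:ℝ) 1, G t = G (1/2) := by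
    intro t ht
    rcases eq_or_lt_of_le ht.1 with h0 | h0
    · -- t = 0
      have hne : (𝓝[Ioo (0:ℝ) 1] t).NeBot := by
        apply mem_closure_iff_nhdsWithin_neBot.1
        rw [closure_Ioo (by norm_num : (0:ℝ) ≠ 1)]
        exact ⟨ht.1, ht.2⟩
      have h1 : Tendsto G (𝓝[Ioo (0:ℝ) 1] t) (𝓝 (G t)) :=
        ((hGc t ht).mono Ioo_subset_Icc_self).tendsto
      have h2 : Tendsto G (𝓝[Ioo (0:ℝ) 1] t) (𝓝 (G (1/2))) := by
        apply Tendsto.congr' _ tendsto_const_nhds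
        filter_upwards [self_mem_nhdsWithin] with x hx
        exact (hIoo x hx).symm
      exact tendsto_nhds_unique h1 h2
    rcases eq_or_lt_of_le ht.2 with h1 | h1
    · -- t = 1, same argument
      have hne : (𝓝[Ioo (0:ℝ) 1] t).NeBot := by
        apply mem_closure_iff_nhdsWithin_neBot.1
        rw [closure_Ioo (by norm_num : (0:ℝ) ≠ 1)]
        exact ⟨ht.1, ht.2⟩
      have hT : Tendsto G (𝓝[Ioo (0:ℝ) 1] t) (𝓝 (G t)) :=
        ((hGc t ht).mono Ioo_subset_Icc_self).tendsto
      have h2 : Tendsto G (𝓝[Ioo (0:ℝ) 1] t) (𝓝 (G (1/2))) := by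
        apply Tendsto.congr' _ tendsto_const_nhds
        filter_upwards [self_mem_nhdsWithin] with x hx
        exact (hIoo x hx).symm
      exact tendsto_nhds_unique hT h2
    · exact hIoo t ⟨h0, h1⟩
  intro t ht
  have h0 : G 0 = G (1/2) := hlim 0 ⟨le_rfl, by norm_num⟩
  have : G 0 = LF 1 := by simp [hG, lphi_zero, LF_zero]
  rw [show LF (lphi t) + LF t = G t from rfl, hlim t ht, ← h0, this]

lemma arctan_lip (x y : ℝ) : |Real.arctan x - Real.arctan y| ≤ |x - y| := by
  have h := Convex.norm_image_sub_le_of_norm_hasDerivWithin_le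
    (f := Real.arctan) (f' := fun z => 1 / (1 + z ^ 2)) (s := Set.univ) (C := 1)
    (fun z _ => (Real.hasDerivAt_arctan z).hasDerivWithinAt)
    (fun z _ => by
      rw [Real.norm_eq_abs, abs_of_nonneg (by positivity)]
      rw [div_le_one (by positivity)]
      nlinarith [sq_nonneg z])
    convex_univ (mem_univ y) (mem_univ x)
  simpa [Real.norm_eq_abs] using h

lemma LF_gap {c : ℝ} (hc : c ∈ Icc (0:ℝ) 1) : Real.sqrt (1 - c) ≤ LF 1 - LF c := by
  rw [LF_sub hc ⟨zero_le_one, le_rfl⟩]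
  have hint : IntervalIntegrable (fun t : ℝ => (1/2) * (1 - t) ^ (-(1:ℝ)/2)) volume c 1 := by
    have := ((intervalIntegrable_rpow' (a := 0) (b := 1 - c) (r := -1/2)
      (by norm_num)).comp_sub_left 1).symm
    simp only [sub_sub_cancel, sub_zero] at this
    exact this.const_mul _
  have hmono : ∫ t in c..1, (1/2) * (1 - t) ^ (-(1:ℝ)/2) ≤ ∫ t in c..1, lemf t := by
    apply intervalIntegral.integral_mono_on hc.2 hint (lemf_intble' hc ⟨zero_le_one, le_rfl⟩)
    intro t ht
    rcases eq_or_lt_of_le ht.2 with h | h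
    · subst h
      norm_num [lemf, Real.zero_rpow (show (-(1:ℝ)/2) ≠ 0 by norm_num)]
    · have ht1 : 0 ≤ t := le_trans hc.1 ht.1
      have hlt : (0:ℝ) < 1 - t := by linarith
      have hr : (1 - t) ^ (-(1:ℝ)/2) = 1 / Real.sqrt (1 - t) := by
        rw [show -(1:ℝ)/2 = -(1/2) by norm_num, Real.rpow_neg hlt.le, ← Real.sqrt_eq_rpow, one_div]
      have h4 : (0:ℝ) < 1 - t ^ 4 := by have := sq4_lt (by linarith : -1 < t) h; linarith
      have key : Real.sqrt (1 - t ^ 4) ≤ 2 * Real.sqrt (1 - t) := by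
        rw [show (2:ℝ) * Real.sqrt (1 - t) = Real.sqrt (4 * (1 - t)) by
          rw [show (4:ℝ) * (1 - t) = 2 ^ 2 * (1 - t) by ring, Real.sqrt_mul (by positivity),
            Real.sqrt_sq (by norm_num : (0:ℝ) ≤ 2)]]
        apply Real.sqrt_le_sqrt
        nlinarith [pow_le_one₀ ht1 h.le (n := 2), pow_le_one₀ ht1 h.le (n := 3)]
      have hfin := one_div_le_one_div_of_le (Real.sqrt_pos.2 h4) key
      rw [hr, lemf]
      calc (1:ℝ)/2 * (1 / Real.sqrt (1 - t)) = 1 / (2 * Real.sqrt (1 - t)) := by ring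
      _ ≤ 1 / Real.sqrt (1 - t ^ 4) := hfin
  refine le_trans (le_of_eq ?_) hmono
  rw [intervalIntegral.integral_const_mul]
  have := intervalIntegral.integral_comp_sub_left (a := c) (b := 1)
    (fun x : ℝ => x ^ (-(1:ℝ)/2)) 1
  rw [this]
  simp only [sub_self]
  rw [integral_rpow (Or.inl (by norm_num))]
  rw [show -(1:ℝ)/2 + 1 = 1/2 by norm_num]
  rw [Real.zero_rpow (by norm_num), ← Real.sqrt_eq_rpow]
  ring

theorem deriv_arctan_cleaf (π₂ : ℝ) (hπ : π₂ = 2 * ∫ t in (0:ℝ)..1, 1 / Real.sqrt (1 - t ^ 4))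
    (sleaf : ℝ → ℝ)
    (hs : ∀ l ∈ Set.Icc 0 (π₂ / 2), sleaf l ∈ Set.Icc (0:ℝ) 1 ∧
      (∫ t in (0:ℝ)..(sleaf l), 1 / Real.sqrt (1 - t ^ 4)) = l)
    (cleaf : ℝ → ℝ)
    (hc : ∀ l ∈ Set.Icc 0 (π₂ / 2), cleaf l ∈ Set.Icc (0:ℝ) 1 ∧
      (∫ t in (cleaf l)..1, 1 / Real.sqrt (1 - t ^ 4)) = l) :
    ∀ l ∈ Set.Icc 0 (π₂ / 2),
      derivWithin (fun x => Real.arctan (cleaf x)) (Set.Icc 0 (π₂ / 2)) l = -sleaf l := by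
  intro l hl
  have hL1 : LF 1 = π₂ / 2 := by
    rw [hπ]; simp only [LF, lemf]; ring
  have hLF_sub : ∀ {a b : ℝ}, a ∈ Icc (0:ℝ) 1 → b ∈ Icc (0:ℝ) 1 →
      LF b - LF a = ∫ t in a..b, lemf t := fun ha hb => LF_sub ha hb
  have h1le : (1:ℝ) ≤ LF 1 := by
    have := LF_lip ⟨le_rfl, zero_le_one⟩ ⟨zero_le_one, le_rfl⟩ zero_le_one
    rw [LF_zero] at this; linarith
  have hπpos : (0:ℝ) < π₂ / 2 := by rw [← hL1]; linarith
  have hLc : ∀ y ∈ Set.Icc 0 (π₂ / 2), LF (cleaf y) = π₂ / 2 - y := by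
    intro y hy
    obtain ⟨hm, hi⟩ := hc y hy
    have hsub := hLF_sub hm ⟨zero_le_one, le_rfl⟩
    have hi' : (∫ t in (cleaf y)..1, lemf t) = y := by simpa only [lemf] using hi
    rw [hi'] at hsub
    linarith [hL1]
  have hLs : ∀ y ∈ Set.Icc 0 (π₂ / 2), LF (sleaf y) = y := by
    intro y hy
    obtain ⟨hm, hi⟩ := hs y hy
    simpa only [LF, lemf] using hi
  have hsl : sleaf l = lphi (cleaf l) := by
    apply LF_inj (hs l hl).1 (lphi_mem (hc l hl).1)
    rw [hLs l hl]
    have hG := G_const (cleaf l) (hc l hl).1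
    rw [hLc l hl] at hG
    linarith [hL1]
  rw [hsl]
  suffices H : HasDerivWithinAt (fun x => Real.arctan (cleaf x)) (-(lphi (cleaf l)))
      (Set.Icc 0 (π₂ / 2)) l by
    exact H.derivWithin (uniqueDiffOn_Icc hπpos l hl)
  rcases eq_or_lt_of_le hl.1 with h0 | h0
  · -- l = 0
    subst h0
    have hc0 : cleaf 0 = 1 := by
      apply LF_inj (hc 0 hl).1 ⟨zero_le_one, le_rfl⟩
      rw [hLc 0 hl, hL1, sub_zero]
    rw [hc0, lphi_one, neg_zero]
    rw [hasDerivWithinAt_iff_tendsto_slope]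
    have hbound : ∀ᶠ y in 𝓝[Set.Icc 0 (π₂/2) \ {(0:ℝ)}] 0,
        ‖slope (fun x => Real.arctan (cleaf x)) 0 y‖ ≤ y := by
      filter_upwards [self_mem_nhdsWithin] with y hy
      obtain ⟨hyS, hyne⟩ := hy
      simp only [mem_singleton_iff] at hyne
      have hy0 : 0 < y := lt_of_le_of_ne hyS.1 (Ne.symm hyne)
      have hcy := (hc y hyS).1
      have hgap := LF_gap hcy
      rw [hLc y hyS, hL1] at hgap
      have hsq : 1 - cleaf y ≤ y ^ 2 := by
        have h1 : Real.sqrt (1 - cleaf y) ≤ y := by linarith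
        nlinarith [Real.sq_sqrt (show (0:ℝ) ≤ 1 - cleaf y by linarith [hcy.2]),
          Real.sqrt_nonneg (1 - cleaf y)]
      have hlip := arctan_lip (cleaf y) (cleaf 0)
      rw [slope_def_field]
      rw [sub_zero, Real.norm_eq_abs, abs_div]
      rw [abs_of_pos hy0]
      rw [div_le_iff₀ hy0]
      calc |Real.arctan (cleaf y) - Real.arctan (cleaf 0)| ≤ |cleaf y - cleaf 0| := hlip
      _ = 1 - cleaf y := by rw [hc0, abs_of_nonpos (by linarith [hcy.2])]; ring
      _ ≤ y ^ 2 := hsq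
      _ = y * y := sq y
    have htend : Tendsto (fun y : ℝ => y) (𝓝[Set.Icc 0 (π₂/2) \ {(0:ℝ)}] 0) (𝓝 0) :=
      tendsto_id.mono_left nhdsWithin_le_nhds
    exact squeeze_zero_norm' hbound htend
  · -- 0 < l
    have hcm := (hc l hl).1
    have hc1 : cleaf l < 1 := by
      rcases eq_or_lt_of_le hcm.2 with h | h
      · exfalso
        have := hLc l hl
        rw [h, hL1] at this
        linarith
      · exact h
    have hcpos : -1 < cleaf l := by linarith [hcm.1]
    have hlemf_pos := lemf_pos hcpos hc1
    have hder : HasDerivWithinAt cleaf (-(lemf (cleaf l))⁻¹) (Set.Icc 0 (π₂/2)) l := by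
      rw [hasDerivWithinAt_iff_tendsto_slope]
      have hne : ∀ y ∈ Set.Icc 0 (π₂/2) \ {l}, cleaf y ≠ cleaf l := by
        intro y hy hcon
        have h1 := hLc y hy.1
        have h2 := hLc l hl
        rw [hcon, h2] at h1
        exact hy.2 (by simp; linarith)
      have hcl : Tendsto cleaf (𝓝[Set.Icc 0 (π₂/2) \ {l}] l) (𝓝[≠] (cleaf l)) := by
        rw [tendsto_nhdsWithin_iff]
        constructor
        · rw [tendsto_iff_dist_tendsto_zero]
          apply squeeze_zero' (Eventually.of_forall (fun y => dist_nonneg))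
          · filter_upwards [self_mem_nhdsWithin] with y hy
            show dist (cleaf y) (cleaf l) ≤ dist y l
            rw [Real.dist_eq, Real.dist_eq]
            have hcy := (hc y hy.1).1
            rcases le_total (cleaf y) (cleaf l) with hcc | hcc
            · have := LF_lip hcy hcm hcc
              rw [hLc y hy.1, hLc l hl] at this
              rw [abs_of_nonpos (by linarith)]
              calc -(cleaf y - cleaf l) ≤ y - l := by linarith
              _ ≤ |y - l| := le_abs_self _
            · have := LF_lip hcm hcy hcc
              rw [hLc y hy.1, hLc l hl] at this
              rw [abs_of_nonneg (by linarith)]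
              calc cleaf y - cleaf l ≤ l - y := by linarith
              _ ≤ |l - y| := le_abs_self _
              _ = |y - l| := abs_sub_comm _ _
          · have : Tendsto (fun y : ℝ => dist y l) (𝓝 l) (𝓝 (dist l l)) :=
              (continuous_id.dist continuous_const).tendsto l
            rw [dist_self] at this
            exact this.mono_left nhdsWithin_le_nhds
        · filter_upwards [self_mem_nhdsWithin] with y hy
          exact hne y hy
      have hslopeLF : Tendsto (slope LF (cleaf l)) (𝓝[≠] (cleaf l)) (𝓝 (lemf (cleaf l))) :=
        hasDerivAt_iff_tendsto_slope.1 (LF_hasDerivAt hcm.1 hc1)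
      have hcomp := (hslopeLF.comp hcl).inv₀ hlemf_pos.ne'
      have hfin := hcomp.neg
      apply hfin.congr'
      filter_upwards [self_mem_nhdsWithin] with y hy
      have hyne : y ≠ l := by
        intro hcon; exact hy.2 (by simp [hcon])
      have hcne := hne y hy
      show -((slope LF (cleaf l)) (cleaf y))⁻¹ = slope cleaf l y
      rw [slope_def_field, slope_def_field, hLc y hy.1, hLc l hl,
        show π₂ / 2 - y - (π₂ / 2 - l) = l - y by ring, inv_div,
        show y - l = -(l - y) by ring, div_neg]
    have harc := (Real.hasDerivAt_arctan (cleaf l)).comp_hasDerivWithinAt l hder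
    convert harc using 1
    · rfl
    · rfl
    · rfl
    -- algebra : -(lphi c) = 1/(1+c²) * -(lemf c)⁻¹
    set cv := cleaf l with hcv
    have hinv : (lemf cv)⁻¹ = Real.sqrt (1 - cv ^ 4) := by
      rw [lemf, one_div, inv_inv]
    set a := Real.sqrt (1 - cv ^ 2) with ha_def
    set b := Real.sqrt (1 + cv ^ 2) with hb_def
    have ha2 : a ^ 2 = 1 - cv ^ 2 := Real.sq_sqrt (by nlinarith [hcm.1, hc1])
    have hb2 : b ^ 2 = 1 + cv ^ 2 := Real.sq_sqrt (by positivity)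
    have hb : 0 < b := Real.sqrt_pos.2 (by positivity)
    have hq : lphi cv = a / b := by
      rw [lphi, show (1 - cv ^ 2) / (1 + cv ^ 2) = (a / b) ^ 2 by
        rw [div_pow, ha2, hb2], Real.sqrt_sq (by positivity)]
    have hab : Real.sqrt (1 - cv ^ 4) = a * b := by
      rw [show (1 : ℝ) - cv ^ 4 = (1 - cv ^ 2) * (1 + cv ^ 2) by ring, ← ha2, ← hb2,
        show a ^ 2 * b ^ 2 = (a * b) ^ 2 by ring, Real.sqrt_sq (by positivity)]
    rw [hq, hinv, hab, ← hb2]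
    field_simp
end

section
/- For all l ∈ [0, π_2/2], ∫_0^l sleaf_2(t) dt = π/4 - arctan(cleaf_2(l)). -/
open Set MeasureTheory intervalIntegral Filter Topology

noncomputable def lf (t : ℝ) : ℝ := 1 / Real.sqrt (1 - t ^ 4)

lemma lf_nonneg (t : ℝ) : 0 ≤ lf t := by
  unfold lf; positivity

lemma lf_pos {t : ℝ} (h : t ∈ Ioo (-1:ℝ) 1) : 0 < lf t := by
  have h4 : t ^ 4 < 1 := by
    have habs := abs_lt.2 ⟨h.1, h.2⟩
    calc t ^ 4 = |t| ^ 4 := by rw [← abs_pow, abs_of_nonneg (by positivity)]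
    _ < 1 := pow_lt_one₀ (abs_nonneg t) habs (by norm_num)
  unfold lf
  have : 0 < Real.sqrt (1 - t ^ 4) := Real.sqrt_pos.2 (by linarith)
  positivity

lemma lf_measurable : Measurable lf := by
  unfold lf; fun_prop

lemma lf_contAt {t : ℝ} (h : t ∈ Ioo (-1:ℝ) 1) : ContinuousAt lf t := by
  have h4 : t ^ 4 < 1 := by
    have habs := abs_lt.2 ⟨h.1, h.2⟩
    calc t ^ 4 = |t| ^ 4 := by rw [← abs_pow, abs_of_nonneg (by positivity)]
    _ < 1 := pow_lt_one₀ (abs_nonneg t) habs (by norm_num)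
  have hne : Real.sqrt (1 - t ^ 4) ≠ 0 := ne_of_gt (Real.sqrt_pos.2 (by linarith))
  exact continuousAt_const.div ((Real.continuous_sqrt.comp (by continuity)).continuousAt) hne

lemma lf_int : IntervalIntegrable lf volume 0 1 := by
  have hg : IntervalIntegrable (fun x : ℝ => (1 - x) ^ (-(1/2) : ℝ)) volume 0 1 := by
    have h0 : IntervalIntegrable (fun x : ℝ => x ^ (-(1/2) : ℝ)) volume 0 1 :=
      intervalIntegrable_rpow' (by norm_num)
    simpa using (h0.comp_sub_left 1).symm
  refine hg.mono_fun (lf_measurable.aestronglyMeasurable.restrict) ?_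
  rw [uIoc_of_le (zero_le_one)]
  refine (ae_restrict_iff' measurableSet_Ioc).2 (Filter.Eventually.of_forall ?_)
  intro x hx
  rcases eq_or_lt_of_le hx.2 with h1 | h1
  · subst h1
    have hz : lf 1 = 0 := by unfold lf; norm_num
    simp only [hz]
    simp
  · have h0 : 0 < x := hx.1
    have hx4 : x ^ 4 ≤ x := pow_le_of_le_one h0.le h1.le (by norm_num)
    have h1x : 0 < 1 - x := by linarith
    have hle : 1 - x ≤ 1 - x ^ 4 := by linarith
    have : Real.sqrt (1 - x) ≤ Real.sqrt (1 - x ^ 4) := Real.sqrt_le_sqrt hle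
    have hsp : 0 < Real.sqrt (1 - x) := Real.sqrt_pos.2 h1x
    have key : lf x ≤ (1 - x) ^ (-(1/2) : ℝ) := by
      rw [Real.rpow_neg h1x.le, ← Real.sqrt_eq_rpow]
      unfold lf
      rw [one_div]
      exact inv_anti₀ hsp this
    have hnn : 0 ≤ (1 - x) ^ (-(1/2) : ℝ) := Real.rpow_nonneg h1x.le _
    simp only [Real.norm_eq_abs, abs_of_nonneg (lf_nonneg x), abs_of_nonneg hnn]
    exact key

noncomputable def Fl (x : ℝ) : ℝ := ∫ t in (0:ℝ)..x, lf t

lemma lf_int' {a b : ℝ} (ha : a ∈ Icc (0:ℝ) 1) (hb : b ∈ Icc (0:ℝ) 1) :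
    IntervalIntegrable lf volume a b :=
  lf_int.mono_set (by
    rw [uIcc_of_le zero_le_one]
    exact uIcc_subset_Icc ha hb)

lemma Fl_zero : Fl 0 = 0 := integral_same

lemma Fl_add {a b : ℝ} (ha : 0 ≤ a) (hb : b ≤ 1) (hab : a ≤ b) :
    Fl a + ∫ t in a..b, lf t = Fl b :=
  integral_add_adjacent_intervals (lf_int' (left_mem_Icc.2 zero_le_one) ⟨ha, hab.trans hb⟩) (lf_int' ⟨ha, hab.trans hb⟩ ⟨ha.trans hab, hb⟩)

lemma Fl_strictMono : StrictMonoOn Fl (Icc 0 1) := by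
  intro a ha b hb hab
  have hpos : 0 < ∫ t in a..b, lf t := by
    refine intervalIntegral.intervalIntegral_pos_of_pos_on (lf_int' ha hb) ?_ hab
    intro x hx
    exact lf_pos ⟨by linarith [ha.1, hx.1], lt_of_lt_of_le hx.2 hb.2⟩
  have := Fl_add ha.1 hb.2 hab.le
  linarith

lemma Fl_mono : MonotoneOn Fl (Icc 0 1) := Fl_strictMono.monotoneOn

lemma Fl_pos : 0 < Fl 1 := by
  have := Fl_strictMono (left_mem_Icc.2 zero_le_one) (right_mem_Icc.2 zero_le_one) zero_lt_one
  rwa [Fl_zero] at this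

lemma Fl_mem {r : ℝ} (hr : r ∈ Icc (0:ℝ) 1) : Fl r ∈ Icc 0 (Fl 1) := by
  constructor
  · have := Fl_mono (left_mem_Icc.2 zero_le_one) hr hr.1
    rwa [Fl_zero] at this
  · exact Fl_mono hr (right_mem_Icc.2 zero_le_one) hr.2

lemma Fl_cont : ContinuousOn Fl (Icc 0 1) := by
  have := intervalIntegral.continuousOn_primitive_interval' lf_int
    (by rw [uIcc_of_le zero_le_one]; exact left_mem_Icc.2 zero_le_one)
  rwa [uIcc_of_le zero_le_one] at this

lemma Fl_hasDerivAt {x : ℝ} (hx : x ∈ Ioo (0:ℝ) 1) : HasDerivAt Fl (lf x) x := by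
  refine intervalIntegral.integral_hasDerivAt_right (lf_int' (left_mem_Icc.2 zero_le_one) ⟨hx.1.le, hx.2.le⟩)
    ⟨univ, Filter.univ_mem, lf_measurable.aestronglyMeasurable.restrict⟩ ?_
  exact lf_contAt ⟨by linarith [hx.1], hx.2⟩

noncomputable def ph (r : ℝ) : ℝ := Real.sqrt ((1 - r ^ 2) / (1 + r ^ 2))

lemma ph_cont : Continuous ph := by
  unfold ph
  exact Real.continuous_sqrt.comp ((continuous_const.sub (continuous_pow 2)).div
    (continuous_const.add (continuous_pow 2)) (fun x => by positivity))

lemma ph_mem {r : ℝ} (hr : r ∈ Icc (0:ℝ) 1) : ph r ∈ Icc (0:ℝ) 1 := by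
  refine ⟨Real.sqrt_nonneg _, Real.sqrt_le_one.2 ?_⟩
  rw [div_le_one (by positivity)]
  nlinarith [hr.1, hr.2]

lemma ph_one : ph 1 = 0 := by unfold ph; norm_num

lemma ph_mem_Ioo {r : ℝ} (hr : r ∈ Ioo (0:ℝ) 1) : ph r ∈ Ioo (0:ℝ) 1 := by
  have h1 : (0:ℝ) < 1 - r ^ 2 := by nlinarith [hr.1, hr.2]
  have h2 : (0:ℝ) < 1 + r ^ 2 := by positivity
  constructor
  · exact Real.sqrt_pos.2 (by positivity)
  · have : (1 - r ^ 2) / (1 + r ^ 2) < 1 := by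
      rw [div_lt_one h2]; nlinarith [hr.1]
    calc ph r < Real.sqrt 1 := by
          refine Real.sqrt_lt_sqrt (by positivity) this
      _ = 1 := Real.sqrt_one

lemma ph_hasDerivAt {r : ℝ} (hr : r ∈ Ioo (0:ℝ) 1) :
    HasDerivAt ph (1 / (2 * ph r) * (-4 * r / (1 + r ^ 2) ^ 2)) r := by
  have h1 : (0:ℝ) < 1 - r ^ 2 := by nlinarith [hr.1, hr.2]
  have h2 : (0:ℝ) < 1 + r ^ 2 := by positivity
  have hinner : HasDerivAt (fun r : ℝ => (1 - r ^ 2) / (1 + r ^ 2))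
      (-4 * r / (1 + r ^ 2) ^ 2) r := by
    have hu : HasDerivAt (fun r : ℝ => 1 - r ^ 2) (-(2 * r)) r := by
      simpa using (hasDerivAt_pow 2 r).const_sub 1
    have hv : HasDerivAt (fun r : ℝ => 1 + r ^ 2) (2 * r) r := by
      simpa using (hasDerivAt_pow 2 r).const_add 1
    have := hu.div hv (by positivity)
    refine this.congr_deriv ?_
    symm
    field_simp
    ring
  have hne : (1 - r ^ 2) / (1 + r ^ 2) ≠ 0 := ne_of_gt (by positivity)
  exact (Real.hasDerivAt_sqrt hne).comp r hinner

lemma sqrt_one_sub_ph_pow4 {r : ℝ} (hr : r ∈ Ioo (0:ℝ) 1) :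
    Real.sqrt (1 - ph r ^ 4) = 2 * r / (1 + r ^ 2) := by
  have h1 : (0:ℝ) < 1 - r ^ 2 := by nlinarith [hr.1, hr.2]
  have h2 : (0:ℝ) < 1 + r ^ 2 := by positivity
  have hsq : ph r ^ 2 = (1 - r ^ 2) / (1 + r ^ 2) := Real.sq_sqrt (by positivity)
  have : 1 - ph r ^ 4 = (2 * r / (1 + r ^ 2)) ^ 2 := by
    have : ph r ^ 4 = ((1 - r ^ 2) / (1 + r ^ 2)) ^ 2 := by
      rw [show (4:ℕ) = 2 * 2 by norm_num, pow_mul, hsq]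
    rw [this]
    field_simp
    ring
  rw [this, Real.sqrt_sq (div_nonneg (by linarith [hr.1]) (by positivity))]

lemma sqrt_one_sub_pow4 {r : ℝ} (hr : r ∈ Ioo (0:ℝ) 1) :
    Real.sqrt (1 - r ^ 4) = Real.sqrt (1 - r ^ 2) * Real.sqrt (1 + r ^ 2) := by
  rw [← Real.sqrt_mul (by nlinarith [hr.1, hr.2] : (0:ℝ) ≤ 1 - r ^ 2)]
  ring_nf

lemma ph_eq_div {r : ℝ} (h : 0 ≤ 1 - r ^ 2) :
    ph r = Real.sqrt (1 - r ^ 2) / Real.sqrt (1 + r ^ 2) := by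
  unfold ph
  rw [Real.sqrt_div h]

lemma const_of_deriv_zero {f : ℝ → ℝ} {a b : ℝ} (hab : a < b)
    (hcont : ContinuousOn f (Icc a b))
    (hderiv : ∀ x ∈ Ioo a b, HasDerivAt f 0 x) :
    ∀ x ∈ Icc a b, f x = f b := by
  set m := (a + b) / 2 with hm
  have hmem : m ∈ Ioo a b := ⟨by simp [hm]; linarith, by simp [hm]; linarith⟩
  have key : ∀ x ∈ Ioo a b, f x = f m := by
    intro x hx
    have pair : ∀ u v : ℝ, u ∈ Ioo a b → v ∈ Ioo a b → u ≤ v → f u = f v := by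
      intro u v hu hv huv
      have h1 : ContinuousOn f (Icc u v) :=
        hcont.mono (Icc_subset_Icc hu.1.le hv.2.le)
      have h2 : ∀ y ∈ Ico u v, HasDerivWithinAt f 0 (Ici y) y := by
        intro y hy
        exact (hderiv y ⟨lt_of_lt_of_le hu.1 hy.1, hy.2.trans hv.2⟩).hasDerivWithinAt
      have := constant_of_has_deriv_right_zero h1 h2 v (right_mem_Icc.2 huv)
      exact this.symm
    rcases le_total x m with h | h
    · exact pair x m hx hmem h
    · exact (pair m x hmem hx h).symm
  have lim_eq : ∀ c ∈ Icc a b, c ∈ closure (Ioo a b) → f c = f m := by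
    intro c hc hcl
    haveI : (𝓝[Ioo a b] c).NeBot := mem_closure_iff_nhdsWithin_neBot.1 hcl
    have h1 : Filter.Tendsto f (𝓝[Ioo a b] c) (𝓝 (f c)) :=
      ((hcont c hc).mono Ioo_subset_Icc_self)
    have h2 : Filter.Tendsto f (𝓝[Ioo a b] c) (𝓝 (f m)) := by
      refine Filter.Tendsto.congr' ?_ tendsto_const_nhds
      filter_upwards [self_mem_nhdsWithin] with y hy
      exact (key y hy).symm
    exact tendsto_nhds_unique h1 h2
  have hcl : closure (Ioo a b) = Icc a b := closure_Ioo hab.ne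
  have fb : f b = f m := lim_eq b (right_mem_Icc.2 hab.le) (by rw [hcl]; exact right_mem_Icc.2 hab.le)
  intro x hx
  rcases eq_or_lt_of_le hx.1 with h | h
  · subst h
    rw [fb]
    exact lim_eq a hx (by rw [hcl]; exact hx)
  · rcases eq_or_lt_of_le hx.2 with h2 | h2
    · rw [h2]
    · rw [fb, key x ⟨h, h2⟩]

lemma keyK : ∀ r ∈ Icc (0:ℝ) 1, Fl (ph r) = Fl 1 - Fl r := by
  have hPsi : ∀ r ∈ Icc (0:ℝ) 1, Fl (ph r) + Fl r = Fl 1 := by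
    have hcont : ContinuousOn (fun r => Fl (ph r) + Fl r) (Icc 0 1) := by
      refine ContinuousOn.add ?_ Fl_cont
      exact Fl_cont.comp ph_cont.continuousOn (fun r hr => ph_mem hr)
    have hderiv : ∀ r ∈ Ioo (0:ℝ) 1, HasDerivAt (fun r => Fl (ph r) + Fl r) 0 r := by
      intro r hr
      have h1 : (0:ℝ) < 1 - r ^ 2 := by nlinarith [hr.1, hr.2]
      have h2 : (0:ℝ) < 1 + r ^ 2 := by positivity
      have hphr := ph_mem_Ioo hr
      have hd1 : HasDerivAt (fun r => Fl (ph r))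
          (lf (ph r) * (1 / (2 * ph r) * (-4 * r / (1 + r ^ 2) ^ 2))) r :=
        (Fl_hasDerivAt hphr).comp r (ph_hasDerivAt hr)
      have hd2 := Fl_hasDerivAt hr
      have := hd1.add hd2
      refine this.congr_deriv ?_
      symm
      -- algebra: lf (ph r) * φ' + lf r = 0
      have hs : (0:ℝ) < Real.sqrt (1 - r ^ 2) := Real.sqrt_pos.2 h1
      have hu : (0:ℝ) < Real.sqrt (1 + r ^ 2) := Real.sqrt_pos.2 h2
      have hu2 : Real.sqrt (1 + r ^ 2) ^ 2 = 1 + r ^ 2 := Real.sq_sqrt h2.le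
      have hs2 : Real.sqrt (1 - r ^ 2) ^ 2 = 1 - r ^ 2 := Real.sq_sqrt h1.le
      have hlfp : lf (ph r) = (1 + r ^ 2) / (2 * r) := by
        unfold lf
        rw [sqrt_one_sub_ph_pow4 hr]
        rw [one_div, inv_div]
      have hlfr : lf r = 1 / (Real.sqrt (1 - r ^ 2) * Real.sqrt (1 + r ^ 2)) := by
        unfold lf
        rw [sqrt_one_sub_pow4 hr]
      have hph : ph r = Real.sqrt (1 - r ^ 2) / Real.sqrt (1 + r ^ 2) := ph_eq_div h1.le
      rw [hlfp, hlfr, hph]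
      have hr0 : (0:ℝ) < r := hr.1
      field_simp
      ring_nf
      rw [hu2]
      ring
    intro r hr
    have := const_of_deriv_zero zero_lt_one hcont hderiv r hr
    rw [this]
    simp [ph_one, Fl_zero]
  intro r hr
  have := hPsi r hr
  linarith

theorem integral_sleaf (π₂ : ℝ) (hπ : π₂ = 2 * ∫ t in (0:ℝ)..1, 1 / Real.sqrt (1 - t ^ 4))
    (sleaf : ℝ → ℝ)
    (hs : ∀ l ∈ Set.Icc 0 (π₂ / 2), sleaf l ∈ Set.Icc (0:ℝ) 1 ∧
      (∫ t in (0:ℝ)..(sleaf l), 1 / Real.sqrt (1 - t ^ 4)) = l)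
    (cleaf : ℝ → ℝ)
    (hc : ∀ l ∈ Set.Icc 0 (π₂ / 2), cleaf l ∈ Set.Icc (0:ℝ) 1 ∧
      (∫ t in (cleaf l)..1, 1 / Real.sqrt (1 - t ^ 4)) = l) :
    ∀ l ∈ Set.Icc 0 (π₂ / 2),
      (∫ t in (0:ℝ)..l, sleaf t) = Real.pi / 4 - Real.arctan (cleaf l) := by
  have hF1 : π₂ / 2 = Fl 1 := by
    have h : Fl 1 = ∫ t in (0:ℝ)..1, 1 / Real.sqrt (1 - t ^ 4) := rfl
    rw [hπ, h]; ring
  have hs' : ∀ x ∈ Icc 0 (Fl 1), sleaf x ∈ Icc (0:ℝ) 1 ∧ Fl (sleaf x) = x := by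
    intro x hx
    have h := hs x (by rwa [hF1])
    exact ⟨h.1, h.2⟩
  have injF := Fl_strictMono.injOn
  have sleaf_F : ∀ r ∈ Icc (0:ℝ) 1, sleaf (Fl r) = r := by
    intro r hr
    exact injF (hs' _ (Fl_mem hr)).1 hr (hs' _ (Fl_mem hr)).2
  have sleaf_mono : StrictMonoOn sleaf (Icc 0 (Fl 1)) := by
    intro x hx y hy hxy
    by_contra hle
    push_neg at hle
    have := Fl_mono (hs' y hy).1 (hs' x hx).1 hle
    rw [(hs' x hx).2, (hs' y hy).2] at this
    linarith
  have sleaf_cont : ContinuousOn sleaf (Icc 0 (Fl 1)) := by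
    intro x hx
    have hright : x < Fl 1 → ContinuousWithinAt sleaf (Ici x) x := by
      intro hxlt
      refine sleaf_mono.continuousWithinAt_right_of_exists_between
        (mem_of_superset (Icc_mem_nhdsGE_of_mem ⟨le_rfl, hxlt⟩) (Icc_subset_Icc hx.1 le_rfl)) ?_
      intro b hb
      have h1 : sleaf x < 1 := by
        refine lt_of_le_of_ne (hs' x hx).1.2 fun h => ?_
        have := (hs' x hx).2
        rw [h] at this
        exact absurd this.symm (ne_of_lt hxlt)
      have hb0 : (0:ℝ) ≤ b := le_trans (hs' x hx).1.1 hb.le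
      have hv1 : min b 1 ∈ Icc (0:ℝ) 1 := ⟨le_min hb0 zero_le_one, min_le_right _ _⟩
      refine ⟨Fl (min b 1), Fl_mem hv1, ?_, ?_⟩
      · rw [sleaf_F _ hv1]; exact lt_min hb h1
      · rw [sleaf_F _ hv1]; exact min_le_left _ _
    have hleft : 0 < x → ContinuousWithinAt sleaf (Iic x) x := by
      intro hxgt
      refine sleaf_mono.continuousWithinAt_left_of_exists_between
        (mem_of_superset (Icc_mem_nhdsLE_of_mem ⟨hxgt, le_rfl⟩) (Icc_subset_Icc le_rfl hx.2)) ?_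
      intro b hb
      have h1 : 0 < sleaf x := by
        refine lt_of_le_of_ne (hs' x hx).1.1 fun h => ?_
        have := (hs' x hx).2
        rw [← h, Fl_zero] at this
        exact absurd this (ne_of_lt hxgt)
      have hb1 : max b 0 ∈ Icc (0:ℝ) 1 := ⟨le_max_right _ _,
        max_le (le_trans hb.le (hs' x hx).1.2) zero_le_one⟩
      refine ⟨Fl (max b 0), Fl_mem hb1, ?_, ?_⟩
      · rw [sleaf_F _ hb1]; exact le_max_left _ _
      · rw [sleaf_F _ hb1]; exact max_lt hb h1
    rcases eq_or_lt_of_le hx.1 with h0 | h0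
    · exact (hright (h0 ▸ Fl_pos)).mono (fun y hy => (h0 ▸ hy.1 : x ≤ y))
    · rcases eq_or_lt_of_le hx.2 with h1 | h1
      · exact (hleft h0).mono (fun y hy => (h1 ▸ hy.2 : y ≤ x))
      · exact (continuousAt_iff_continuous_left_right.2
          ⟨hleft h0, hright h1⟩).continuousWithinAt
  set G : ℝ → ℝ := fun x => ∫ t in (0:ℝ)..x, sleaf t with hG
  have hint : IntervalIntegrable sleaf volume 0 (Fl 1) :=
    (by rwa [uIcc_of_le Fl_pos.le] : ContinuousOn sleaf (uIcc 0 (Fl 1))).intervalIntegrable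
  have G_cont : ContinuousOn G (Icc 0 (Fl 1)) := by
    have := intervalIntegral.continuousOn_primitive_interval' hint
      (by rw [uIcc_of_le Fl_pos.le]; exact left_mem_Icc.2 Fl_pos.le)
    rwa [uIcc_of_le Fl_pos.le] at this
  have G_deriv : ∀ x ∈ Ioo 0 (Fl 1), HasDerivAt G (sleaf x) x := by
    intro x hx
    have hmem : Icc 0 (Fl 1) ∈ 𝓝 x := Icc_mem_nhds hx.1 hx.2
    refine intervalIntegral.integral_hasDerivAt_right ?_ ?_ ?_
    · have hcc : ContinuousOn sleaf (uIcc 0 x) := by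
        rw [uIcc_of_le hx.1.le]
        exact sleaf_cont.mono (Icc_subset_Icc le_rfl hx.2.le)
      exact hcc.intervalIntegrable
    · exact ⟨Icc 0 (Fl 1), hmem, sleaf_cont.aestronglyMeasurable measurableSet_Icc⟩
    · exact sleaf_cont.continuousAt hmem
  have sphi : ∀ r ∈ Icc (0:ℝ) 1, sleaf (Fl 1 - Fl r) = ph r := by
    intro r hr
    have hl' : Fl 1 - Fl r ∈ Icc 0 (Fl 1) :=
      ⟨by linarith [(Fl_mem hr).2], by linarith [(Fl_mem hr).1]⟩
    refine injF (hs' _ hl').1 (ph_mem hr) ?_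
    rw [(hs' _ hl').2, keyK r hr]
  have hD : ∀ r ∈ Icc (0:ℝ) 1,
      G (Fl 1 - Fl r) - (Real.pi / 4 - Real.arctan r) = 0 := by
    have hcont : ContinuousOn
        (fun r => G (Fl 1 - Fl r) - (Real.pi / 4 - Real.arctan r)) (Icc 0 1) := by
      refine ContinuousOn.sub ?_
        (Continuous.continuousOn (continuous_const.sub Real.continuous_arctan))
      refine G_cont.comp (continuousOn_const.sub Fl_cont) ?_
      intro r hr
      constructor
      · show (0:ℝ) ≤ Fl 1 - Fl r
        linarith [(Fl_mem hr).2]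
      · show Fl 1 - Fl r ≤ Fl 1
        linarith [(Fl_mem hr).1]
    have hderiv : ∀ r ∈ Ioo (0:ℝ) 1, HasDerivAt
        (fun r => G (Fl 1 - Fl r) - (Real.pi / 4 - Real.arctan r)) 0 r := by
      intro r hr
      have hr01 : r ∈ Icc (0:ℝ) 1 := ⟨hr.1.le, hr.2.le⟩
      have hx : Fl 1 - Fl r ∈ Ioo 0 (Fl 1) := by
        constructor
        · have : Fl r < Fl 1 := Fl_strictMono hr01 (right_mem_Icc.2 zero_le_one) hr.2
          linarith
        · have h0 : Fl 0 < Fl r := Fl_strictMono (left_mem_Icc.2 zero_le_one) hr01 hr.1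
          rw [Fl_zero] at h0
          linarith
      have hinner : HasDerivAt (fun r => Fl 1 - Fl r) (0 - lf r) r :=
        (hasDerivAt_const r (Fl 1)).sub (Fl_hasDerivAt hr)
      have h1 : HasDerivAt (fun r => G (Fl 1 - Fl r)) (sleaf (Fl 1 - Fl r) * (0 - lf r)) r :=
        by have := (G_deriv _ hx).comp r hinner; exact this
      have h2 := Real.hasDerivAt_arctan r
      have htot := h1.sub ((hasDerivAt_const r (Real.pi / 4)).sub h2)
      refine htot.congr_deriv ?_
      symm
      rw [sphi r hr01]
      have h1' : (0:ℝ) < 1 - r ^ 2 := by nlinarith [hr.1, hr.2]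
      have h2' : (0:ℝ) < 1 + r ^ 2 := by positivity
      have hs0 : (0:ℝ) < Real.sqrt (1 - r ^ 2) := Real.sqrt_pos.2 h1'
      have hu0 : (0:ℝ) < Real.sqrt (1 + r ^ 2) := Real.sqrt_pos.2 h2'
      have hu2 : Real.sqrt (1 + r ^ 2) ^ 2 = 1 + r ^ 2 := Real.sq_sqrt h2'.le
      have hlfr : lf r = 1 / (Real.sqrt (1 - r ^ 2) * Real.sqrt (1 + r ^ 2)) := by
        unfold lf
        rw [sqrt_one_sub_pow4 hr]
      rw [ph_eq_div h1'.le, hlfr]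
      field_simp
      linear_combination (-1) * hu2
    intro r hr
    have := const_of_deriv_zero zero_lt_one hcont hderiv r hr
    rw [this, sub_self, hG]
    simp [Real.arctan_one]
  intro l hl
  have hl' : l ∈ Icc 0 (Fl 1) := by rwa [hF1] at hl
  obtain ⟨hcm, hci⟩ := hc l (by rwa [hF1])
  have hci' : (∫ t in (cleaf l)..1, lf t) = l := hci
  have hFr : Fl 1 - Fl (cleaf l) = l := by
    have := Fl_add hcm.1 le_rfl hcm.2
    rw [hci'] at this
    linarith
  have hfin := hD (cleaf l) hcm
  rw [hFr] at hfin
  have : G l = Real.pi / 4 - Real.arctan (cleaf l) := by linarith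
  exact this
end
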